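/- Fix γ > 0 and set η = 0. The function b ↦ γ − √(((2 − bγ)² + (bγ − 1)γ²)/(b(b+γ) − 1)), defined for b with b(b+γ) > 1 and bγ > 1, attains its maximum at b = 2/γ, with maximum value γ·(1 − √(γ²/(4 + γ²))). -/

import Mathlib

open Real

theorem lambda1_maximized_at_b_eq_two_over_gamma
    (γ : ℝ) (hγ : 0 < γ)
    (lam1 : ℝ → ℝ)
    (hlam1 : ∀ b : ℝ, lam1 b =
      γ - Real.sqrt (((2 - b * γ) ^ 2 + (b * γ - 1) * γ ^ 2) / (b * (b + γ) - 1))) :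
    (∀ b : ℝ, 1 < b * (b + γ) → 1 < b * γ → lam1 b ≤ lam1 (2 / γ)) ∧
    lam1 (2 / γ) = γ * (1 - Real.sqrt (γ ^ 2 / (4 + γ ^ 2))) := by
  have hg2 : (0:ℝ) < 4 + γ ^ 2 := by positivity
  have harg : ((2 - (2/γ) * γ) ^ 2 + ((2/γ) * γ - 1) * γ ^ 2) / ((2/γ) * ((2/γ) + γ) - 1)
      = γ ^ 2 * (γ ^ 2 / (4 + γ ^ 2)) := by
    have hb : (2/γ) * ((2/γ) + γ) - 1 = (4 + γ^2)/γ^2 := by field_simp; ring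
    have h1 : (2 - (2/γ) * γ) = 0 := by field_simp; ring
    have h2 : ((2/γ) * γ - 1) = 1 := by
      field_simp; linarith [div_mul_cancel₀ (2:ℝ) hγ.ne']
    rw [hb, h1, h2, div_div_eq_mul_div]
    ring
  have hval : lam1 (2/γ) = γ * (1 - Real.sqrt (γ ^ 2 / (4 + γ ^ 2))) := by
    rw [hlam1, harg, Real.sqrt_mul (sq_nonneg γ), Real.sqrt_sq hγ.le]
    ring
  refine ⟨fun b hD hbγ => ?_, hval⟩
  rw [hlam1 b, hval]
  have hDpos : 0 < b * (b + γ) - 1 := by linarith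
  have hle : γ ^ 2 * (γ ^ 2 / (4 + γ ^ 2))
      ≤ ((2 - b * γ) ^ 2 + (b * γ - 1) * γ ^ 2) / (b * (b + γ) - 1) := by
    rw [mul_div_assoc', div_le_div_iff₀ hg2 hDpos]
    nlinarith [sq_nonneg (2 * (b * γ) - 4)]
  calc γ * (1 - Real.sqrt (γ ^ 2 / (4 + γ ^ 2)))
      = γ - Real.sqrt (γ ^ 2 * (γ ^ 2 / (4 + γ ^ 2))) := by
        rw [Real.sqrt_mul (sq_nonneg γ), Real.sqrt_sq hγ.le]; ring
    _ ≥ γ - Real.sqrt (((2 - b * γ) ^ 2 + (b * γ - 1) * γ ^ 2) / (b * (b + γ) - 1)) := by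
        have := Real.sqrt_le_sqrt hle
        linarith
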